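/- Let C : H_C⊕...⊕H_C → H_C and A : H_A⊕...⊕H_A → H_A (d summands each) be row contractions, let D_C = (1 - C*C)^{1/2} on ⨁^d H_C, D_{*,A} = (1 - A A*)^{1/2} on H_A, with defect spaces 𝒟_C = closure(range D_C) and 𝒟_{*,A} = closure(range D_{*,A}). Let γ : 𝒟_{*,A} → 𝒟_C be a contraction and define B* := D_C* γ D_{*,A} : H_A → ⨁^d H_C (where D_C* denotes D_C followed by inclusion). Then the row operator E with components E_i = [[C_i, 0], [B_i, A_i]] on H_C ⊕ H_A is a row contraction, i.e., E E* ≤ 1. -/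

import Mathlib

set_option maxHeartbeats 1000000
set_option synthInstance.maxHeartbeats 100000

open ContinuousLinearMap RCLike in
theorem key_row {H K : Type*}
    [NormedAddCommGroup H] [InnerProductSpace ℂ H] [CompleteSpace H]
    [NormedAddCommGroup K] [InnerProductSpace ℂ K] [CompleteSpace K]
    (A : K →L[ℂ] H) (D : H →L[ℂ] H) (hsa : IsSelfAdjoint D)
    (hD : D ∘L D = 1 - A ∘L ContinuousLinearMap.adjoint A)
    (v : H) (y : K) : ‖D v + A y‖ ^ 2 ≤ ‖v‖ ^ 2 + ‖y‖ ^ 2 := by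
  set w := D v + A y with hw
  have h1 : (inner ℂ (D w) (D w) : ℂ) = inner ℂ w ((D ∘L D) w) := by
    rw [comp_apply]
    nth_rewrite 1 [← hsa.adjoint_eq]
    exact adjoint_inner_left D (D w) w
  have h2 : (inner ℂ (adjoint A w) (adjoint A w) : ℂ) = inner ℂ w ((A ∘L adjoint A) w) := by
    rw [comp_apply]
    exact adjoint_inner_left A (adjoint A w) w
  have hsum : ‖D w‖ ^ 2 + ‖adjoint A w‖ ^ 2 = ‖w‖ ^ 2 := by
    have key : (inner ℂ (D w) (D w) : ℂ) + inner ℂ (adjoint A w) (adjoint A w) = inner ℂ w w := by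
      rw [h1, h2, hD]
      simp [inner_sub_right]
    rw [← inner_self_eq_norm_sq (𝕜 := ℂ) (D w), ← inner_self_eq_norm_sq (𝕜 := ℂ) (adjoint A w),
      ← inner_self_eq_norm_sq (𝕜 := ℂ) w, ← map_add, key]
  have hrep : ‖w‖ ^ 2 = re (inner ℂ v (D w) : ℂ) + re (inner ℂ y (adjoint A w) : ℂ) := by
    have h0 : (inner ℂ w w : ℂ) = inner ℂ (D v) w + inner ℂ (A y) w := by
      rw [hw]; rw [inner_add_left]
    have h3 : (inner ℂ (D v) w : ℂ) = inner ℂ v (D w) := by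
      nth_rewrite 1 [← hsa.adjoint_eq]
      exact adjoint_inner_left D w v
    have h4 : (inner ℂ (A y) w : ℂ) = inner ℂ y (adjoint A w) :=
      (adjoint_inner_right A y w).symm
    rw [← inner_self_eq_norm_sq (𝕜 := ℂ), h0, h3, h4, map_add]
  have hcs1 : re (inner ℂ v (D w) : ℂ) ≤ ‖v‖ * ‖D w‖ := re_inner_le_norm v (D w)
  have hcs2 : re (inner ℂ y (adjoint A w) : ℂ) ≤ ‖y‖ * ‖adjoint A w‖ :=
    re_inner_le_norm y (adjoint A w)
  have hle : ‖w‖ ^ 2 ≤ ‖v‖ * ‖D w‖ + ‖y‖ * ‖adjoint A w‖ := by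
    rw [hrep]; exact add_le_add hcs1 hcs2
  nlinarith [sq_nonneg (‖v‖ * ‖adjoint A w‖ - ‖y‖ * ‖D w‖), norm_nonneg w, norm_nonneg v,
    norm_nonneg y, norm_nonneg (D w), norm_nonneg (adjoint A w), sq_nonneg ‖w‖,
    sq_nonneg (‖v‖ * ‖D w‖ + ‖y‖ * ‖adjoint A w‖)]


/-- The `L²` direct sum of finitely many complete spaces is complete. -/
instance PiLp.instCompleteSpace' {ι : Type*} (p : ENNReal) (α : ι → Type*)
    [∀ i, UniformSpace (α i)] [∀ i, CompleteSpace (α i)] : CompleteSpace (PiLp p α) :=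
  PiLp.completeSpace p α

/-- Let `C`, `A` be row contractions with defect operators `D_C`, `D_{*,A}`,
let `γ : 𝒟_{*,A} → 𝒟_C` be a contraction between the defect spaces, and set
`B* := D_C ∘ (inclusion) ∘ γ ∘ D_{*,A} : H_A → ⨁^d H_C`.  Then the row operator `E` with
components `E_i = [[C_i, 0], [B_i, A_i]]` is a row contraction, i.e. for all
`x ∈ ⨁^d H_C`, `y ∈ ⨁^d H_A` we have `‖C x‖² + ‖B x + A y‖² ≤ ‖x‖² + ‖y‖²`. -/
theorem stmt_4 {HC HA : Type*}
    [NormedAddCommGroup HC] [InnerProductSpace ℂ HC] [CompleteSpace HC]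
    [NormedAddCommGroup HA] [InnerProductSpace ℂ HA] [CompleteSpace HA]
    (d : ℕ) (hd : 1 ≤ d)
    (C : PiLp 2 (fun _ : Fin d => HC) →L[ℂ] HC) (hCc : ‖C‖ ≤ 1)
    (A : PiLp 2 (fun _ : Fin d => HA) →L[ℂ] HA) (hAc : ‖A‖ ≤ 1)
    (DC : PiLp 2 (fun _ : Fin d => HC) →L[ℂ] PiLp 2 (fun _ : Fin d => HC))
    (DsA : HA →L[ℂ] HA)
    (hDC_pos : DC.IsPositive) (hDsA_pos : DsA.IsPositive)
    (hDC : DC ∘L DC = 1 - ContinuousLinearMap.adjoint C ∘L C)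
    (hDsA : DsA ∘L DsA = 1 - A ∘L ContinuousLinearMap.adjoint A)
    (γ : (LinearMap.range DsA.toLinearMap).topologicalClosure →L[ℂ]
      (LinearMap.range DC.toLinearMap).topologicalClosure)
    (hγ : ‖γ‖ ≤ 1) :
    ∀ (x : PiLp 2 (fun _ : Fin d => HC)) (y : PiLp 2 (fun _ : Fin d => HA)),
      ‖C x‖ ^ 2 +
        ‖(ContinuousLinearMap.adjoint
            (DC ∘L ((LinearMap.range DC.toLinearMap).topologicalClosure.subtypeL ∘L
              (γ ∘L DsA.codRestrict (LinearMap.range DsA.toLinearMap).topologicalClosure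
                (fun z =>
                  Submodule.le_topologicalClosure _ (LinearMap.mem_range_self DsA.toLinearMap z)))))) x
          + A y‖ ^ 2
        ≤ ‖x‖ ^ 2 + ‖y‖ ^ 2 := by
  intro x y
  open ContinuousLinearMap RCLike in
  set ι := (LinearMap.range DC.toLinearMap).topologicalClosure.subtypeL with hι
  set σ := (LinearMap.range DsA.toLinearMap).topologicalClosure.subtypeL with hσ
  set c := DsA.codRestrict (LinearMap.range DsA.toLinearMap).topologicalClosure
    (fun z => Submodule.le_topologicalClosure _ (LinearMap.mem_range_self DsA.toLinearMap z)) with hc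
  -- adjoint of codRestrict
  have hadj_c : DsA ∘L σ = adjoint c := by
    rw [eq_adjoint_iff]
    intro u w
    rw [comp_apply]
    have h0 : (inner ℂ u (c w) : ℂ) = inner ℂ ((u : HA)) (DsA w) := by
      rw [Submodule.coe_inner]; rfl
    have hsaD : ∀ (z w' : HA), (inner ℂ (DsA z) w' : ℂ) = inner ℂ z (DsA w') := by
      intro z w'
      nth_rewrite 1 [← hDsA_pos.isSelfAdjoint.adjoint_eq]
      exact adjoint_inner_left DsA w' z
    rw [h0, hsaD]
    rfl
  -- identify B x
  set u := adjoint γ (adjoint ι (DC x)) with hu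
  set v := σ u with hv
  have hBx : (adjoint (DC ∘L (ι ∘L (γ ∘L c)))) x = DsA v := by
    rw [adjoint_comp, adjoint_comp, adjoint_comp, hDC_pos.isSelfAdjoint.adjoint_eq]
    simp only [comp_apply, ← hadj_c, hv, hu]
  -- norm of v
  have hvDCx : ‖v‖ ≤ ‖DC x‖ := by
    have h1 : ‖v‖ = ‖u‖ := rfl
    have h2 : ‖u‖ ≤ ‖adjoint γ‖ * ‖adjoint ι (DC x)‖ := le_opNorm _ _
    have h3 : ‖adjoint γ‖ = ‖γ‖ := adjoint.norm_map γ
    have h4 : ‖adjoint ι (DC x)‖ ≤ ‖adjoint ι‖ * ‖DC x‖ := le_opNorm _ _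
    have h5 : ‖adjoint ι‖ = ‖ι‖ := adjoint.norm_map ι
    have h6 : ‖ι‖ ≤ 1 := Submodule.norm_subtypeL_le _
    calc ‖v‖ = ‖u‖ := h1
      _ ≤ ‖adjoint γ‖ * ‖adjoint ι (DC x)‖ := h2
      _ ≤ 1 * (1 * ‖DC x‖) := by
          apply mul_le_mul (h3 ▸ hγ)
          · calc ‖adjoint ι (DC x)‖ ≤ ‖adjoint ι‖ * ‖DC x‖ := h4
              _ ≤ 1 * ‖DC x‖ := by
                  apply mul_le_mul_of_nonneg_right (h5 ▸ h6) (norm_nonneg _)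
          · exact norm_nonneg _
          · norm_num
      _ = ‖DC x‖ := by ring
  -- defect identity
  have hdefect : ‖DC x‖ ^ 2 = ‖x‖ ^ 2 - ‖C x‖ ^ 2 := by
    have h1 : (inner ℂ (DC x) (DC x) : ℂ) = inner ℂ x ((DC ∘L DC) x) := by
      rw [comp_apply]
      nth_rewrite 1 [← hDC_pos.isSelfAdjoint.adjoint_eq]
      exact adjoint_inner_left DC (DC x) x
    have h2 : (inner ℂ x ((adjoint C ∘L C) x) : ℂ) = inner ℂ (C x) (C x) := by
      rw [comp_apply]
      exact adjoint_inner_right C x (C x)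
    have key : (inner ℂ (DC x) (DC x) : ℂ) = inner ℂ x x - inner ℂ (C x) (C x) := by
      rw [h1, hDC, ← h2]
      simp [inner_sub_right]
    have := congrArg re key
    rw [inner_self_eq_norm_sq (𝕜 := ℂ), map_sub, inner_self_eq_norm_sq (𝕜 := ℂ),
      inner_self_eq_norm_sq (𝕜 := ℂ)] at this
    exact this
  rw [hBx]
  have hkey := key_row A DsA hDsA_pos.isSelfAdjoint hDsA v y
  have hv2 : ‖v‖ ^ 2 ≤ ‖DC x‖ ^ 2 := by
    apply pow_le_pow_left₀ (norm_nonneg _) hvDCx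
  nlinarith [hkey, hv2, hdefect]
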